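/- arXiv:2003.05360 — 2 statements merged into one kernel-verified Lean document; each statement's English description precedes it below -/
import Mathlib

section
/- Let α₀, α₁ ∈ OR be such that the function α₀/α₁ is bounded on a neighbourhood of infinity, and let ψ belong to the class 𝓑 and be pseudoconcave in a neighbourhood of +∞. Then the function α defined by α(t) := α₀(t)·ψ(α₁(t)/α₀(t)) for t ≥ 1 belongs to OR. -/
/-- The class OR of O-regularly varying functions: Borel measurable
`α : [1,∞) → (0,∞)` such that `c⁻¹ ≤ α (l * t) / α t ≤ c` for all `t ≥ 1`
and `l ∈ [1, b]`, for some `b > 1` and `c ≥ 1`. -/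
def IsOR (α : ℝ → ℝ) : Prop :=
  Measurable ((Set.Ici (1:ℝ)).restrict α) ∧ (∀ t, 1 ≤ t → 0 < α t) ∧
  ∃ b : ℝ, 1 < b ∧ ∃ c : ℝ, 1 ≤ c ∧ ∀ t, 1 ≤ t → ∀ l, 1 ≤ l → l ≤ b →
    c⁻¹ ≤ α (l * t) / α t ∧ α (l * t) / α t ≤ c

/-- The class `𝓑`: Borel measurable `ψ : (0,∞) → (0,∞)` that is bounded on each compact
subset of `(0,∞)` and such that `1/ψ` is bounded on every set `[r,∞)` with `r > 0`. -/
def InClassB (ψ : ℝ → ℝ) : Prop :=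
  Measurable ((Set.Ioi (0:ℝ)).restrict ψ) ∧ (∀ t, 0 < t → 0 < ψ t) ∧
  (∀ K : Set ℝ, IsCompact K → K ⊆ Set.Ioi 0 → ∃ M : ℝ, ∀ t ∈ K, ψ t ≤ M) ∧
  (∀ r : ℝ, 0 < r → ∃ M : ℝ, ∀ t, r ≤ t → (ψ t)⁻¹ ≤ M)

/-- `ψ` is pseudoconcave in a neighbourhood of `+∞`: there are `b > 0` and a concave
positive function `ψ₁` on `(b,∞)` such that `ψ/ψ₁` and `ψ₁/ψ` are bounded on `(b,∞)`. -/
def PseudoconcaveAtTop (ψ : ℝ → ℝ) : Prop :=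
  ∃ b : ℝ, 0 < b ∧ ∃ ψ₁ : ℝ → ℝ,
    ConcaveOn ℝ (Set.Ioi b) ψ₁ ∧ (∀ t, b < t → 0 < ψ₁ t) ∧
    (∃ M : ℝ, ∀ t, b < t → ψ t / ψ₁ t ≤ M) ∧
    (∃ M : ℝ, ∀ t, b < t → ψ₁ t / ψ t ≤ M)


lemma concave_pos_mono {b : ℝ} {f : ℝ → ℝ} (hc : ConcaveOn ℝ (Set.Ioi b) f)
    (hp : ∀ t, b < t → 0 < f t) :
    ∀ x y, b < x → x ≤ y → f x ≤ f y := by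
  intro x y hx hxy
  rcases eq_or_lt_of_le hxy with rfl | hlt
  · exact le_refl _
  by_contra hcon
  push_neg at hcon
  have hDpos : 0 < f x - f y := by linarith
  have hfy : 0 < f y := hp y (hx.trans hlt)
  set z := y + (y - x) * f y / (f x - f y) with hz
  have hq : 0 < (y - x) * f y / (f x - f y) := div_pos (by nlinarith) hDpos
  have hzy : y < z := by rw [hz]; linarith
  have hzx : x < z := hlt.trans hzy
  have hzb : b < z := hx.trans hzx
  have hne : (0:ℝ) < z - x := by linarith
  have hne' : z - x ≠ 0 := ne_of_gt hne
  have ha : (0:ℝ) ≤ (z - y) / (z - x) := by apply div_nonneg <;> linarith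
  have hb2 : (0:ℝ) ≤ (y - x) / (z - x) := by apply div_nonneg <;> linarith
  have hsum : (z - y) / (z - x) + (y - x) / (z - x) = 1 := by
    rw [← add_div, div_eq_one_iff_eq hne']; ring
  have hkey := hc.2 (Set.mem_Ioi.2 hx) (Set.mem_Ioi.2 hzb) ha hb2 hsum
  have hpt : ((z - y) / (z - x)) • x + ((y - x) / (z - x)) • z = y := by
    simp only [smul_eq_mul]
    field_simp
    ring
  rw [hpt] at hkey
  have hfz : 0 < f z := hp z hzb
  have hkey2 : (z - y) * f x + (y - x) * f z ≤ (z - x) * f y := by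
    simp only [smul_eq_mul, div_mul_eq_mul_div] at hkey
    rw [← add_div, div_le_iff₀ hne] at hkey
    nlinarith [hkey]
  have hzval : (z - y) * (f x - f y) = (y - x) * f y := by
    rw [hz]; field_simp; ring
  nlinarith [mul_pos (sub_pos.2 hlt) hfz]

lemma concave_pos_double {b C : ℝ} {f : ℝ → ℝ} (hc : ConcaveOn ℝ (Set.Ioi b) f)
    (hp : ∀ t, b < t → 0 < f t) (hb : 0 < b) (hC : 1 ≤ C) :
    ∀ s, 2 * (b + 1) ≤ s → f (C * s) ≤ 2 * C * f s := by
  intro s hs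
  have hpb : b < b + 1 := by linarith
  have hsb : b < s := by linarith
  have hCs : s ≤ C * s := by nlinarith
  have hCsb : b < C * s := lt_of_lt_of_le hsb hCs
  have hden : (0:ℝ) < C * s - (b + 1) := by linarith
  have hden' : C * s - (b + 1) ≠ 0 := ne_of_gt hden
  have ha : (0:ℝ) ≤ (C * s - s) / (C * s - (b + 1)) := by apply div_nonneg <;> linarith
  have hb2 : (0:ℝ) ≤ (s - (b + 1)) / (C * s - (b + 1)) := by apply div_nonneg <;> linarith
  have hsum : (C * s - s) / (C * s - (b + 1)) + (s - (b + 1)) / (C * s - (b + 1)) = 1 := by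
    rw [← add_div, div_eq_one_iff_eq hden']; ring
  have hkey := hc.2 (Set.mem_Ioi.2 hpb) (Set.mem_Ioi.2 hCsb) ha hb2 hsum
  have hpt : ((C * s - s) / (C * s - (b + 1))) • (b + 1)
      + ((s - (b + 1)) / (C * s - (b + 1))) • (C * s) = s := by
    simp only [smul_eq_mul]
    field_simp
    ring
  rw [hpt] at hkey
  have hfp : 0 < f (b + 1) := hp _ hpb
  have hfs : 0 < f s := hp _ hsb
  have hfCs : 0 < f (C * s) := hp _ hCsb
  have hkey2 : (C * s - s) * f (b + 1) + (s - (b + 1)) * f (C * s) ≤ (C * s - (b + 1)) * f s := by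
    simp only [smul_eq_mul, div_mul_eq_mul_div] at hkey
    rw [← add_div, div_le_iff₀ hden] at hkey
    nlinarith [hkey]
  have h1 : (s - (b + 1)) * f (C * s) ≤ (C * s - (b + 1)) * f s := by nlinarith
  have h2 : C * s - (b + 1) ≤ 2 * C * (s - (b + 1)) := by nlinarith
  have h3 : (0:ℝ) < s - (b + 1) := by linarith
  have := le_trans h1 (by nlinarith : (C * s - (b + 1)) * f s ≤ 2 * C * (s - (b + 1)) * f s)
  nlinarith [this]


lemma or_pow (f : ℝ → ℝ) (b c : ℝ) (hb : 1 < b) (hc : 1 ≤ c)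
    (hf : ∀ t, 1 ≤ t → 0 < f t)
    (h : ∀ t, 1 ≤ t → ∀ l, 1 ≤ l → l ≤ b → f t ≤ c * f (l * t) ∧ f (l * t) ≤ c * f t) :
    ∀ n : ℕ, ∀ t, 1 ≤ t → t ≤ b ^ n → f 1 ≤ c ^ n * f t ∧ f t ≤ c ^ n * f 1 := by
  intro n
  induction n with
  | zero =>
    intro t ht htn
    simp only [pow_zero] at htn ⊢
    have : t = 1 := le_antisymm htn ht
    subst this
    simp
  | succ n ih =>
    intro t ht htn
    have hcpos : (0:ℝ) < c := by linarith
    have hcn : (0:ℝ) < c ^ n := by positivity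
    by_cases hcase : t ≤ b
    · have := h 1 le_rfl t ht hcase
      rw [mul_one] at this
      have hc1 : c ≤ c ^ (n + 1) := by
        calc c = c ^ 1 := (pow_one c).symm
          _ ≤ c ^ (n + 1) := pow_le_pow_right₀ hc (by omega)
      constructor
      · calc f 1 ≤ c * f t := this.1
          _ ≤ c ^ (n + 1) * f t := mul_le_mul_of_nonneg_right hc1 (hf t ht).le
      · calc f t ≤ c * f 1 := this.2
          _ ≤ c ^ (n + 1) * f 1 := mul_le_mul_of_nonneg_right hc1 (hf 1 le_rfl).le
    · push_neg at hcase
      have hs1 : 1 ≤ t / b := by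
        rw [le_div_iff₀ (by linarith : (0:ℝ) < b)]; linarith
      have hsn : t / b ≤ b ^ n := by
        rw [div_le_iff₀ (by linarith : (0:ℝ) < b), ← pow_succ]; exact htn
      obtain ⟨ih1, ih2⟩ := ih (t / b) hs1 hsn
      have hbt : b * (t / b) = t := by field_simp
      have hstep := h (t / b) hs1 b hb.le le_rfl
      rw [hbt] at hstep
      have hft : 0 < f t := hf t (by linarith)
      have hfs : 0 < f (t / b) := hf _ hs1
      constructor
      · calc f 1 ≤ c ^ n * f (t / b) := ih1
          _ ≤ c ^ n * (c * f t) := mul_le_mul_of_nonneg_left hstep.1 hcn.le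
          _ = c ^ (n + 1) * f t := by ring
      · calc f t ≤ c * f (t / b) := hstep.2
          _ ≤ c * (c ^ n * f 1) := mul_le_mul_of_nonneg_left ih2 hcpos.le
          _ = c ^ (n + 1) * f 1 := by ring

lemma psi_ratio (ψ : ℝ → ℝ) (hψB : InClassB ψ) (hψpc : PseudoconcaveAtTop ψ)
    (C r : ℝ) (hC : 1 ≤ C) (hr : 0 < r) :
    ∃ K : ℝ, 1 ≤ K ∧ ∀ s s', r ≤ s → r ≤ s' → s' ≤ C * s → s ≤ C * s' →
      ψ s' ≤ K * ψ s := by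
  obtain ⟨hmeas, hpos, hcpt, hinv⟩ := hψB
  obtain ⟨bψ, hbψ, ψ₁, hconc, hψ₁pos, ⟨M₁, hM₁⟩, ⟨M₂, hM₂⟩⟩ := hψpc
  have hCpos : (0:ℝ) < C := by linarith
  set s₀ := 2 * (bψ + 1) with hs₀
  have hs₀pos : 0 < s₀ := by rw [hs₀]; linarith
  -- compact bound on [r, C*(C*s₀)]
  obtain ⟨Mc, hMc⟩ := hcpt (Set.Icc r (C * (C * max s₀ r))) isCompact_Icc
    (fun x hx => lt_of_lt_of_le hr hx.1)
  obtain ⟨Mr, hMr⟩ := hinv r hr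
  have hMrpos : 0 < Mr := lt_of_lt_of_le (inv_pos.2 (hpos r hr)) (hMr r le_rfl)
  -- M₁, M₂ positive
  have hbψ1 : bψ < bψ + 1 := by linarith
  have hM₁pos : 0 < M₁ :=
    lt_of_lt_of_le (div_pos (hpos _ (lt_trans hbψ hbψ1)) (hψ₁pos _ hbψ1)) (hM₁ _ hbψ1)
  have hM₂pos : 0 < M₂ :=
    lt_of_lt_of_le (div_pos (hψ₁pos _ hbψ1) (hpos _ (lt_trans hbψ hbψ1))) (hM₂ _ hbψ1)
  refine ⟨max 1 (max (Mc * Mr) (M₁ * (2 * C) * M₂)), le_max_left _ _, ?_⟩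
  intro s s' hrs hrs' hsC hsC'
  have hspos : 0 < s := lt_of_lt_of_le hr hrs
  have hs'pos : 0 < s' := lt_of_lt_of_le hr hrs'
  have hψs : 0 < ψ s := hpos s hspos
  have hψs' : 0 < ψ s' := hpos s' hs'pos
  by_cases hcase : s ≤ C * max s₀ r
  · -- compact case
    have hmem : s' ∈ Set.Icc r (C * (C * max s₀ r)) :=
      ⟨hrs', le_trans hsC (by nlinarith)⟩
    have h1 : ψ s' ≤ Mc := hMc s' hmem
    have h2 : (1:ℝ) ≤ Mr * ψ s := by
      have := hMr s hrs
      rw [inv_le_iff_one_le_mul₀' hψs] at this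
      linarith [this]
    have : ψ s' ≤ Mc * Mr * ψ s := by nlinarith
    calc ψ s' ≤ Mc * Mr * ψ s := this
      _ ≤ max 1 (max (Mc * Mr) (M₁ * (2 * C) * M₂)) * ψ s := by
          apply mul_le_mul_of_nonneg_right _ hψs.le
          exact le_trans (le_max_left _ _) (le_max_right _ _)
  · push_neg at hcase
    have hss₀ : s₀ ≤ s := by
      have : s₀ ≤ max s₀ r := le_max_left _ _
      nlinarith
    have hsbψ : bψ < s := by rw [hs₀] at hss₀; linarith
    have hs'bψ : bψ < s' := by
      have h : C * max s₀ r < C * (C * s') := by nlinarith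
      have h2 : max s₀ r < C * s' := by nlinarith
      have h3 : s₀ ≤ max s₀ r := le_max_left _ _
      have h4 : C * max s₀ r < C * s' := lt_of_lt_of_le hcase hsC'
      have h5 : max s₀ r < s' := by nlinarith
      rw [hs₀] at h3; linarith [le_max_left s₀ r]
    have hψ₁s : 0 < ψ₁ s := hψ₁pos s hsbψ
    have hψ₁s' : 0 < ψ₁ s' := hψ₁pos s' hs'bψ
    have hss₀' : 2 * (bψ + 1) ≤ s := by rw [hs₀] at hss₀; exact hss₀
    have m1 : ψ₁ s' ≤ ψ₁ (C * s) := concave_pos_mono hconc hψ₁pos s' (C * s) hs'bψ hsC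
    have m2 : ψ₁ (C * s) ≤ 2 * C * ψ₁ s := concave_pos_double hconc hψ₁pos hbψ hC s hss₀'
    have m3 : ψ s' ≤ M₁ * ψ₁ s' := by
      have := hM₁ s' hs'bψ
      rw [div_le_iff₀ hψ₁s'] at this; linarith
    have m4 : ψ₁ s ≤ M₂ * ψ s := by
      have := hM₂ s hsbψ
      rw [div_le_iff₀ hψs] at this; linarith
    have h5 : M₁ * ψ₁ s' ≤ M₁ * ψ₁ (C * s) := mul_le_mul_of_nonneg_left m1 hM₁pos.le
    have h6 : M₁ * ψ₁ (C * s) ≤ M₁ * (2 * C * ψ₁ s) := mul_le_mul_of_nonneg_left m2 hM₁pos.le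
    have h7 : M₁ * (2 * C * ψ₁ s) ≤ M₁ * (2 * C * (M₂ * ψ s)) :=
      mul_le_mul_of_nonneg_left
        (mul_le_mul_of_nonneg_left m4 (by positivity)) hM₁pos.le
    have chain : ψ s' ≤ M₁ * (2 * C) * M₂ * ψ s := by nlinarith [m3, h5, h6, h7]
    calc ψ s' ≤ M₁ * (2 * C) * M₂ * ψ s := chain
      _ ≤ max 1 (max (Mc * Mr) (M₁ * (2 * C) * M₂)) * ψ s := by
          apply mul_le_mul_of_nonneg_right _ hψs.le
          exact le_trans (le_max_right _ _) (le_max_right _ _)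

set_option maxHeartbeats 1000000 in
/-- If `α₀, α₁ ∈ OR`, `α₀/α₁` is bounded on a neighbourhood of infinity,
and `ψ ∈ 𝓑` is pseudoconcave in a neighbourhood of `+∞`, then
`t ↦ α₀(t)·ψ(α₁(t)/α₀(t))` belongs to OR. -/
theorem stmt_16 (α₀ α₁ : ℝ → ℝ) (hα₀ : IsOR α₀) (hα₁ : IsOR α₁)
    (hbdd : ∃ T : ℝ, 1 ≤ T ∧ ∃ M : ℝ, ∀ t, T ≤ t → α₀ t / α₁ t ≤ M)
    (ψ : ℝ → ℝ) (hψB : InClassB ψ) (hψpc : PseudoconcaveAtTop ψ) :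
    IsOR (fun t => α₀ t * ψ (α₁ t / α₀ t)) := by
  obtain ⟨hm₀, hp₀, b₀, hb₀, c₀, hc₀, h₀⟩ := hα₀
  obtain ⟨hm₁, hp₁, b₁, hb₁, c₁, hc₁, h₁⟩ := hα₁
  obtain ⟨T, hT, M, hM⟩ := hbdd
  have hc₀p : (0:ℝ) < c₀ := by linarith
  have hc₁p : (0:ℝ) < c₁ := by linarith
  refine ⟨?_, ?_, ?_⟩
  · -- measurability
    have g : Measurable (fun x : Set.Ici (1:ℝ) =>
        (⟨α₁ x / α₀ x, div_pos (hp₁ x x.2) (hp₀ x x.2)⟩ : Set.Ioi (0:ℝ))) :=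
      Measurable.subtype_mk (hm₁.div hm₀)
    exact hm₀.mul (hψB.1.comp g)
  · intro t ht
    exact mul_pos (hp₀ t ht) (hψB.2.1 _ (div_pos (hp₁ t ht) (hp₀ t ht)))
  · -- conversion to multiplicative form
    have conv : ∀ (a d c : ℝ), 0 < d → 0 < c → c⁻¹ ≤ a / d → a / d ≤ c →
        d ≤ c * a ∧ a ≤ c * d := by
      intro a d c hd hcp h1 h2
      rw [le_div_iff₀ hd] at h1
      rw [div_le_iff₀ hd] at h2
      constructor
      · have := mul_le_mul_of_nonneg_left h1 hcp.le
        rwa [← mul_assoc, mul_inv_cancel₀ (ne_of_gt hcp), one_mul] at this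
      · linarith
    set b : ℝ := min b₀ b₁ with hbdef
    have hb : 1 < b := lt_min hb₀ hb₁
    have hmul₀ : ∀ t, 1 ≤ t → ∀ l, 1 ≤ l → l ≤ b →
        α₀ t ≤ c₀ * α₀ (l * t) ∧ α₀ (l * t) ≤ c₀ * α₀ t := by
      intro t ht l hl hlb
      obtain ⟨x1, x2⟩ := h₀ t ht l hl (le_trans hlb (min_le_left _ _))
      exact conv _ _ _ (hp₀ t ht) hc₀p x1 x2
    have hmul₁ : ∀ t, 1 ≤ t → ∀ l, 1 ≤ l → l ≤ b →
        α₁ t ≤ c₁ * α₁ (l * t) ∧ α₁ (l * t) ≤ c₁ * α₁ t := by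
      intro t ht l hl hlb
      obtain ⟨x1, x2⟩ := h₁ t ht l hl (le_trans hlb (min_le_right _ _))
      exact conv _ _ _ (hp₁ t ht) hc₁p x1 x2
    obtain ⟨n, hn⟩ := pow_unbounded_of_one_lt T hb
    have hP₀ := or_pow α₀ b c₀ hb hc₀ hp₀ hmul₀
    have hP₁ := or_pow α₁ b c₁ hb hc₁ hp₁ hmul₁
    have hMpos : 0 < M :=
      lt_of_lt_of_le (div_pos (hp₀ T hT) (hp₁ T hT)) (hM T le_rfl)
    set r₁ : ℝ := α₁ 1 / (c₁ ^ n * (c₀ ^ n * α₀ 1)) with hr₁def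
    have hr₁pos : 0 < r₁ := by
      rw [hr₁def]
      exact div_pos (hp₁ 1 le_rfl)
        (mul_pos (pow_pos hc₁p n) (mul_pos (pow_pos hc₀p n) (hp₀ 1 le_rfl)))
    set r : ℝ := min r₁ M⁻¹ with hrdef
    have hr : 0 < r := lt_min hr₁pos (inv_pos.2 hMpos)
    -- lower bound on u t = α₁ t / α₀ t
    have hur : ∀ t, 1 ≤ t → r ≤ α₁ t / α₀ t := by
      intro t ht
      by_cases hcase : t ≤ b ^ n
      · obtain ⟨hA, _⟩ := hP₁ n t ht hcase
        obtain ⟨_, hB⟩ := hP₀ n t ht hcase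
        refine le_trans (min_le_left _ _) ?_
        rw [hr₁def, div_le_div_iff₀
          (mul_pos (pow_pos hc₁p n) (mul_pos (pow_pos hc₀p n) (hp₀ 1 le_rfl))) (hp₀ t ht)]
        have key := mul_le_mul hA hB (hp₀ t ht).le
          (mul_pos (pow_pos hc₁p n) (hp₁ t ht)).le
        nlinarith [key]
      · push_neg at hcase
        refine le_trans (min_le_right _ _) ?_
        have hTt : T ≤ t := by linarith
        have h := hM t hTt
        rw [div_le_iff₀ (hp₁ t ht)] at h
        rw [le_div_iff₀ (hp₀ t ht)]
        have := mul_le_mul_of_nonneg_left h (inv_pos.2 hMpos).le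
        rwa [← mul_assoc, inv_mul_cancel₀ (ne_of_gt hMpos), one_mul] at this
    have hC : (1:ℝ) ≤ c₀ * c₁ := by nlinarith
    obtain ⟨K, hK1, hK⟩ := psi_ratio ψ hψB hψpc (c₀ * c₁) r hC hr
    have hKpos : (0:ℝ) < K := by linarith
    refine ⟨b, hb, c₀ * K, by nlinarith, ?_⟩
    intro t ht l hl hlb
    have hlt : 1 ≤ l * t := by nlinarith
    have hp₀t := hp₀ t ht
    have hp₀lt := hp₀ (l * t) hlt
    have hp₁t := hp₁ t ht
    have hp₁lt := hp₁ (l * t) hlt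
    obtain ⟨hA1, hA2⟩ := hmul₀ t ht l hl hlb
    obtain ⟨hB1, hB2⟩ := hmul₁ t ht l hl hlb
    -- ratio bounds on u
    have hu1 : α₁ (l * t) / α₀ (l * t) ≤ (c₀ * c₁) * (α₁ t / α₀ t) := by
      rw [← mul_div_assoc, div_le_div_iff₀ hp₀lt hp₀t]
      have key := mul_le_mul hB2 hA1 hp₀t.le (mul_pos hc₁p hp₁t).le
      nlinarith [key]
    have hu2 : α₁ t / α₀ t ≤ (c₀ * c₁) * (α₁ (l * t) / α₀ (l * t)) := by
      rw [← mul_div_assoc, div_le_div_iff₀ hp₀t hp₀lt]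
      have key := mul_le_mul hB1 hA2 hp₀lt.le (mul_pos hc₁p hp₁lt).le
      nlinarith [key]
    have hψub := hK (α₁ t / α₀ t) (α₁ (l * t) / α₀ (l * t)) (hur t ht) (hur _ hlt) hu1 hu2
    have hψlb := hK (α₁ (l * t) / α₀ (l * t)) (α₁ t / α₀ t) (hur _ hlt) (hur t ht) hu2 hu1
    have hψt : 0 < ψ (α₁ t / α₀ t) := hψB.2.1 _ (div_pos hp₁t hp₀t)
    have hψlt : 0 < ψ (α₁ (l * t) / α₀ (l * t)) := hψB.2.1 _ (div_pos hp₁lt hp₀lt)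
    dsimp only
    constructor
    · rw [le_div_iff₀ (mul_pos hp₀t hψt), inv_mul_le_iff₀ (mul_pos hc₀p hKpos)]
      have key := mul_le_mul hA1 hψlb hψt.le (mul_pos hc₀p hp₀lt).le
      nlinarith [key]
    · rw [div_le_iff₀ (mul_pos hp₀t hψt)]
      have key := mul_le_mul hA2 hψub hψlt.le (mul_pos hc₀p hp₀t).le
      nlinarith [key]
end

section
/- Let α ∈ OR and s ∈ ℝ. Then the series Σ_{k=0}^∞ α²(2ᵏ)·4^{−sk} converges if and only if ∫₁^∞ α²(t)/t^{2s+1} dt < ∞. -/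
open MeasureTheory

/-- Bounds on `u ^ r` for `u ∈ [1, 2]`. -/
private lemma rpow_bounds_of_mem {u : ℝ} (h1 : 1 ≤ u) (h2 : u ≤ 2) (r : ℝ) :
    (2:ℝ) ^ (-|r|) ≤ u ^ r ∧ u ^ r ≤ (2:ℝ) ^ |r| := by
  have hu : (0:ℝ) < u := lt_of_lt_of_le one_pos h1
  rw [Real.rpow_def_of_pos hu, Real.rpow_def_of_pos two_pos, Real.rpow_def_of_pos two_pos]
  have hlogu : 0 ≤ Real.log u := Real.log_nonneg h1
  have hlog2 : Real.log u ≤ Real.log 2 := Real.log_le_log hu h2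
  constructor
  · apply Real.exp_le_exp.2
    have h3 : -|r| * Real.log 2 ≤ -|r| * Real.log u :=
      mul_le_mul_of_nonpos_left hlog2 (neg_nonpos.2 (abs_nonneg r))
    have h4 : -|r| * Real.log u ≤ r * Real.log u :=
      mul_le_mul_of_nonneg_right (neg_abs_le r) hlogu
    linarith
  · apply Real.exp_le_exp.2
    have h3 : r * Real.log u ≤ |r| * Real.log u :=
      mul_le_mul_of_nonneg_right (le_abs_self r) hlogu
    have h4 : |r| * Real.log u ≤ |r| * Real.log 2 :=
      mul_le_mul_of_nonneg_left hlog2 (abs_nonneg r)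
    linarith

/-- A uniform doubling constant for functions of class OR. -/
private lemma or_doubling {α : ℝ → ℝ} (hα : IsOR α) :
    ∃ C : ℝ, 1 ≤ C ∧ ∀ t, 1 ≤ t → ∀ l, 1 ≤ l → l ≤ 2 →
      α (l * t) ≤ C * α t ∧ α t ≤ C * α (l * t) := by
  obtain ⟨-, hpos, b, hb, c, hc, hbc⟩ := hα
  have step : ∀ t, 1 ≤ t → ∀ l, 1 ≤ l → l ≤ b →
      α (l * t) ≤ c * α t ∧ α t ≤ c * α (l * t) := by
    intro t ht l hl hlb
    obtain ⟨h1, h2⟩ := hbc t ht l hl hlb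
    have hat : 0 < α t := hpos t ht
    have hc0 : 0 < c := lt_of_lt_of_le one_pos hc
    constructor
    · have := (div_le_iff₀ hat).1 h2
      linarith
    · have h3' : c⁻¹ * α t ≤ α (l * t) := by
        have := mul_le_mul_of_nonneg_right h1 hat.le
        rwa [div_mul_cancel₀ _ hat.ne'] at this
      calc α t = c * (c⁻¹ * α t) := by field_simp
        _ ≤ c * α (l * t) := mul_le_mul_of_nonneg_left h3' hc0.le
  have iter : ∀ n : ℕ, ∀ t, 1 ≤ t → ∀ l, 1 ≤ l → l ≤ b ^ n →
      α (l * t) ≤ c ^ n * α t ∧ α t ≤ c ^ n * α (l * t) := by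
    intro n
    induction n with
    | zero =>
      intro t ht l hl hlb
      have hl1 : l = 1 := le_antisymm (by simpa using hlb) hl
      subst hl1
      simp
    | succ n ih =>
      intro t ht l hl hlb
      have hb0 : (0:ℝ) < b := lt_trans one_pos hb
      have hbn : (1:ℝ) ≤ b ^ n := one_le_pow₀ hb.le
      have hc0 : (0:ℝ) < c := lt_of_lt_of_le one_pos hc
      have hcn : (1:ℝ) ≤ c ^ n := one_le_pow₀ hc
      by_cases hcase : l ≤ b ^ n
      · obtain ⟨h1, h2⟩ := ih t ht l hl hcase
        have hat : 0 < α t := hpos t ht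
        have hlt1 : (1:ℝ) ≤ l * t := by nlinarith
        have halt : 0 < α (l * t) := hpos _ hlt1
        have hle : c ^ n ≤ c ^ (n + 1) := pow_le_pow_right₀ hc (Nat.le_succ n)
        exact ⟨le_trans h1 (mul_le_mul_of_nonneg_right hle hat.le),
          le_trans h2 (mul_le_mul_of_nonneg_right hle halt.le)⟩
      · push_neg at hcase
        set l' := l / b ^ n with hl'
        have hbn0 : (b:ℝ) ^ n ≠ 0 := by positivity
        have hl'1 : 1 ≤ l' := (one_le_div (by positivity)).2 hcase.le
        have hl'b : l' ≤ b := by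
          rw [hl', div_le_iff₀ (by positivity)]
          calc l ≤ b ^ (n + 1) := hlb
            _ = b * b ^ n := by ring
        have hbt : 1 ≤ b ^ n * t := one_le_mul_of_one_le_of_one_le hbn ht
        have heq : l' * (b ^ n * t) = l * t := by
          rw [hl']; field_simp
        obtain ⟨h1, h2⟩ := step (b ^ n * t) hbt l' hl'1 hl'b
        obtain ⟨h3, h4⟩ := ih t ht (b ^ n) hbn le_rfl
        rw [heq] at h1 h2
        have hat : 0 < α t := hpos t ht
        have habt : 0 < α (b ^ n * t) := hpos _ hbt
        constructor
        · calc α (l * t) ≤ c * α (b ^ n * t) := h1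
            _ ≤ c * (c ^ n * α t) := mul_le_mul_of_nonneg_left h3 hc0.le
            _ = c ^ (n + 1) * α t := by ring
        · calc α t ≤ c ^ n * α (b ^ n * t) := h4
            _ ≤ c ^ n * (c * α (l * t)) := mul_le_mul_of_nonneg_left h2 (by positivity)
            _ = c ^ (n + 1) * α (l * t) := by ring
  obtain ⟨n, hn⟩ := pow_unbounded_of_one_lt (2:ℝ) hb
  exact ⟨c ^ n, one_le_pow₀ hc, fun t ht l hl hl2 =>
    iter n t ht l hl (le_trans hl2 hn.le)⟩

set_option maxHeartbeats 1000000 in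
/-- For `α ∈ OR` and `s ∈ ℝ`, the series `Σ_{k=0}^∞ α²(2ᵏ)·4^{−sk}`
converges if and only if `∫₁^∞ α²(t)/t^{2s+1} dt < ∞`. -/
theorem stmt_19 (α : ℝ → ℝ) (hα : IsOR α) (s : ℝ) :
    Summable (fun k : ℕ => α ((2:ℝ) ^ k) ^ 2 * (4:ℝ) ^ (-(s * (k:ℝ)))) ↔
    (∫⁻ t in Set.Ici (1:ℝ), ENNReal.ofReal (α t ^ 2 / t ^ (2 * s + 1))) < ⊤ := by
  obtain ⟨C, hC1, hC⟩ := or_doubling hα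
  have hpos := hα.2.1
  have hC0 : (0:ℝ) < C := lt_of_lt_of_le one_pos hC1
  set r : ℝ := 2 * s + 1 with hr
  set g : ℕ → ℝ := fun k : ℕ => α ((2:ℝ) ^ k) ^ 2 * (4:ℝ) ^ (-(s * (k:ℝ))) with hgdef
  set D : ℝ := C ^ 2 * (2:ℝ) ^ |r| with hD
  have hD0 : 0 < D := by
    have : (0:ℝ) < (2:ℝ) ^ |r| := Real.rpow_pos_of_pos two_pos _
    positivity
  -- positivity of 2^k and α(2^k)
  have h2k1 : ∀ k : ℕ, (1:ℝ) ≤ 2 ^ k := fun k => one_le_pow₀ one_le_two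
  have h2k0 : ∀ k : ℕ, (0:ℝ) < 2 ^ k := fun k => lt_of_lt_of_le one_pos (h2k1 k)
  have hgpos : ∀ k : ℕ, 0 < g k := by
    intro k
    have h1 := hpos _ (h2k1 k)
    have h4 : (0:ℝ) < (4:ℝ) ^ (-(s * (k:ℝ))) := Real.rpow_pos_of_pos (by norm_num) _
    exact mul_pos (pow_pos h1 2) h4
  -- the key exponent identity
  have hkey : ∀ k : ℕ, (2:ℝ) ^ k / ((2:ℝ) ^ k) ^ r = (4:ℝ) ^ (-(s * (k:ℝ))) := by
    intro k
    have h4 : (4:ℝ) = (2:ℝ) ^ (2:ℝ) := by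
      rw [show (2:ℝ) ^ (2:ℝ) = (2:ℝ) ^ ((2:ℕ):ℝ) from by norm_num, Real.rpow_natCast]
      norm_num
    nth_rewrite 1 [show (2:ℝ) ^ k = (2:ℝ) ^ ((k:ℕ):ℝ) from (Real.rpow_natCast 2 k).symm]
    rw [show ((2:ℝ) ^ k) ^ r = ((2:ℝ) ^ ((k:ℕ):ℝ)) ^ r from by rw [Real.rpow_natCast],
      ← Real.rpow_mul two_pos.le, ← Real.rpow_sub two_pos, h4,
      ← Real.rpow_mul two_pos.le]
    congr 1
    rw [hr]; ring
  -- decomposition of [1, ∞) into dyadic blocks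
  have hIci : Set.Ici (1:ℝ) = ⋃ k : ℕ, Set.Ico ((2:ℝ) ^ k) ((2:ℝ) ^ (k + 1)) := by
    ext t
    simp only [Set.mem_Ici, Set.mem_iUnion, Set.mem_Ico]
    constructor
    · intro ht
      exact exists_nat_pow_near ht one_lt_two
    · rintro ⟨k, hk, -⟩
      exact le_trans (h2k1 k) hk
  have hdisj : Pairwise (Function.onFun Disjoint
      fun k : ℕ => Set.Ico ((2:ℝ) ^ k) ((2:ℝ) ^ (k + 1))) := by
    have key : ∀ i j : ℕ, i < j →
        Disjoint (Set.Ico ((2:ℝ) ^ i) ((2:ℝ) ^ (i + 1)))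
          (Set.Ico ((2:ℝ) ^ j) ((2:ℝ) ^ (j + 1))) := by
      intro i j hij
      apply Set.disjoint_left.2
      rintro x ⟨-, hx2⟩ ⟨hx3, -⟩
      have h : (2:ℝ) ^ (i + 1) ≤ 2 ^ j := pow_le_pow_right₀ one_le_two hij
      linarith
    intro i j hij
    rcases hij.lt_or_gt with h | h
    · exact key i j h
    · exact (key j i h).symm
  have hsplit : (∫⁻ t in Set.Ici (1:ℝ), ENNReal.ofReal (α t ^ 2 / t ^ r)) =
      ∑' k : ℕ, ∫⁻ t in Set.Ico ((2:ℝ) ^ k) ((2:ℝ) ^ (k + 1)),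
        ENNReal.ofReal (α t ^ 2 / t ^ r) := by
    rw [hIci, Measure.restrict_iUnion hdisj (fun k => measurableSet_Ico),
      lintegral_sum_measure]
  -- pointwise bounds on each block
  have hblock : ∀ k : ℕ, ∀ t ∈ Set.Ico ((2:ℝ) ^ k) ((2:ℝ) ^ (k + 1)),
      D⁻¹ * (α ((2:ℝ) ^ k) ^ 2 / ((2:ℝ) ^ k) ^ r) ≤ α t ^ 2 / t ^ r ∧
      α t ^ 2 / t ^ r ≤ D * (α ((2:ℝ) ^ k) ^ 2 / ((2:ℝ) ^ k) ^ r) := by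
    intro k t ht
    obtain ⟨ht1, ht2⟩ := ht
    set a : ℝ := (2:ℝ) ^ k with ha
    have ha1 : (1:ℝ) ≤ a := h2k1 k
    have ha0 : (0:ℝ) < a := h2k0 k
    have ht2' : t < 2 * a := by
      rw [ha]; rw [pow_succ] at ht2; linarith
    have htt : (1:ℝ) ≤ t := le_trans ha1 ht1
    have ht0 : (0:ℝ) < t := lt_of_lt_of_le one_pos htt
    set u : ℝ := t / a with hu
    have hu1 : 1 ≤ u := (one_le_div ha0).2 ht1
    have hu2 : u ≤ 2 := by
      rw [hu, div_le_iff₀ ha0]; linarith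
    have hua : u * a = t := div_mul_cancel₀ t ha0.ne'
    obtain ⟨hα1, hα2⟩ := hC a ha1 u hu1 hu2
    rw [hua] at hα1 hα2
    have haa : 0 < α a := hpos a ha1
    have hat : 0 < α t := hpos t htt
    -- rpow comparisons
    obtain ⟨hr1, hr2⟩ := rpow_bounds_of_mem hu1 hu2 r
    have htr : t ^ r = u ^ r * a ^ r := by
      rw [← hua, Real.mul_rpow (by linarith) ha0.le]
    have h2abs : (0:ℝ) < (2:ℝ) ^ |r| := Real.rpow_pos_of_pos two_pos _
    have h2negabs : (0:ℝ) < (2:ℝ) ^ (-|r|) := Real.rpow_pos_of_pos two_pos _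
    have h2mul : (2:ℝ) ^ (-|r|) * (2:ℝ) ^ |r| = 1 := by
      rw [← Real.rpow_add two_pos]; simp
    have har0 : (0:ℝ) < a ^ r := Real.rpow_pos_of_pos ha0 _
    have htr0 : (0:ℝ) < t ^ r := Real.rpow_pos_of_pos ht0 _
    have hur0 : (0:ℝ) < u ^ r := Real.rpow_pos_of_pos (by linarith) _
    have hp1 : t ^ r ≤ (2:ℝ) ^ |r| * a ^ r := by
      rw [htr]; nlinarith
    have hp2 : a ^ r ≤ (2:ℝ) ^ |r| * t ^ r := by
      -- a^r * 2^(-|r|) ≤ a^r * u^r = t^r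
      nlinarith [mul_le_mul_of_nonneg_left hr1 har0.le]
    have hsq1 : α t ^ 2 ≤ C ^ 2 * α a ^ 2 := by nlinarith
    have hsq2 : α a ^ 2 ≤ C ^ 2 * α t ^ 2 := by nlinarith
    constructor
    · rw [inv_mul_le_iff₀ hD0, ← mul_div_assoc, div_le_div_iff₀ har0 htr0]
      calc α a ^ 2 * t ^ r ≤ (C ^ 2 * α t ^ 2) * ((2:ℝ) ^ |r| * a ^ r) :=
            mul_le_mul hsq2 hp1 htr0.le (by positivity)
        _ = D * α t ^ 2 * a ^ r := by rw [hD]; ring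
    · rw [← mul_div_assoc, div_le_div_iff₀ htr0 har0]
      calc α t ^ 2 * a ^ r ≤ (C ^ 2 * α a ^ 2) * ((2:ℝ) ^ |r| * t ^ r) :=
            mul_le_mul hsq1 hp2 har0.le (by positivity)
        _ = D * α a ^ 2 * t ^ r := by rw [hD]; ring
  -- block integral bounds
  have hvol : ∀ k : ℕ, volume (Set.Ico ((2:ℝ) ^ k) ((2:ℝ) ^ (k + 1))) =
      ENNReal.ofReal ((2:ℝ) ^ k) := by
    intro k
    rw [Real.volume_Ico]
    congr 1
    rw [pow_succ]; ring
  have hAk : ∀ k : ℕ, (α ((2:ℝ) ^ k) ^ 2 / ((2:ℝ) ^ k) ^ r) * (2:ℝ) ^ k = g k := by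
    intro k
    show (α ((2:ℝ) ^ k) ^ 2 / ((2:ℝ) ^ k) ^ r) * (2:ℝ) ^ k =
      α ((2:ℝ) ^ k) ^ 2 * (4:ℝ) ^ (-(s * (k:ℝ)))
    rw [div_mul_eq_mul_div, mul_div_assoc, hkey k]
  have hIUB : ∀ k : ℕ, (∫⁻ t in Set.Ico ((2:ℝ) ^ k) ((2:ℝ) ^ (k + 1)),
      ENNReal.ofReal (α t ^ 2 / t ^ r)) ≤ ENNReal.ofReal D * ENNReal.ofReal (g k) := by
    intro k
    have hAk0 : 0 ≤ α ((2:ℝ) ^ k) ^ 2 / ((2:ℝ) ^ k) ^ r := by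
      have := Real.rpow_pos_of_pos (h2k0 k) r
      positivity
    calc (∫⁻ t in Set.Ico ((2:ℝ) ^ k) ((2:ℝ) ^ (k + 1)),
          ENNReal.ofReal (α t ^ 2 / t ^ r))
        ≤ ∫⁻ _ in Set.Ico ((2:ℝ) ^ k) ((2:ℝ) ^ (k + 1)),
            ENNReal.ofReal (D * (α ((2:ℝ) ^ k) ^ 2 / ((2:ℝ) ^ k) ^ r)) := by
          apply lintegral_mono_ae
          rw [ae_restrict_iff' measurableSet_Ico]
          exact Filter.Eventually.of_forall fun t ht =>
            ENNReal.ofReal_le_ofReal (hblock k t ht).2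
      _ = ENNReal.ofReal (D * (α ((2:ℝ) ^ k) ^ 2 / ((2:ℝ) ^ k) ^ r)) *
            ENNReal.ofReal ((2:ℝ) ^ k) := by rw [setLIntegral_const, hvol k]
      _ = ENNReal.ofReal (D * ((α ((2:ℝ) ^ k) ^ 2 / ((2:ℝ) ^ k) ^ r) * (2:ℝ) ^ k)) := by
          rw [← ENNReal.ofReal_mul (mul_nonneg hD0.le hAk0), mul_assoc]
      _ = ENNReal.ofReal D * ENNReal.ofReal (g k) := by
          rw [hAk k, ENNReal.ofReal_mul hD0.le]
  have hILB : ∀ k : ℕ, ENNReal.ofReal D⁻¹ * ENNReal.ofReal (g k) ≤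
      (∫⁻ t in Set.Ico ((2:ℝ) ^ k) ((2:ℝ) ^ (k + 1)),
        ENNReal.ofReal (α t ^ 2 / t ^ r)) := by
    intro k
    have hAk0 : 0 ≤ α ((2:ℝ) ^ k) ^ 2 / ((2:ℝ) ^ k) ^ r := by
      have := Real.rpow_pos_of_pos (h2k0 k) r
      positivity
    calc ENNReal.ofReal D⁻¹ * ENNReal.ofReal (g k)
        = ENNReal.ofReal (D⁻¹ * ((α ((2:ℝ) ^ k) ^ 2 / ((2:ℝ) ^ k) ^ r) * (2:ℝ) ^ k)) := by
          rw [hAk k, ENNReal.ofReal_mul (inv_nonneg.2 hD0.le)]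
      _ = ENNReal.ofReal (D⁻¹ * (α ((2:ℝ) ^ k) ^ 2 / ((2:ℝ) ^ k) ^ r)) *
            ENNReal.ofReal ((2:ℝ) ^ k) := by
          rw [← ENNReal.ofReal_mul (mul_nonneg (inv_nonneg.2 hD0.le) hAk0), mul_assoc]
      _ = ∫⁻ _ in Set.Ico ((2:ℝ) ^ k) ((2:ℝ) ^ (k + 1)),
            ENNReal.ofReal (D⁻¹ * (α ((2:ℝ) ^ k) ^ 2 / ((2:ℝ) ^ k) ^ r)) := by
          rw [setLIntegral_const, hvol k]
      _ ≤ ∫⁻ t in Set.Ico ((2:ℝ) ^ k) ((2:ℝ) ^ (k + 1)),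
            ENNReal.ofReal (α t ^ 2 / t ^ r) := by
          apply lintegral_mono_ae
          rw [ae_restrict_iff' measurableSet_Ico]
          exact Filter.Eventually.of_forall fun t ht =>
            ENNReal.ofReal_le_ofReal (hblock k t ht).1
  -- conclude
  constructor
  · intro hsum
    rw [hsplit]
    have he : (∑' k : ℕ, ENNReal.ofReal (g k)) < ⊤ := by
      rw [← ENNReal.ofReal_tsum_of_nonneg (fun k => (hgpos k).le) hsum]
      exact ENNReal.ofReal_lt_top
    calc (∑' k : ℕ, ∫⁻ t in Set.Ico ((2:ℝ) ^ k) ((2:ℝ) ^ (k + 1)),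
          ENNReal.ofReal (α t ^ 2 / t ^ r))
        ≤ ∑' k : ℕ, ENNReal.ofReal D * ENNReal.ofReal (g k) := ENNReal.tsum_le_tsum hIUB
      _ = ENNReal.ofReal D * ∑' k : ℕ, ENNReal.ofReal (g k) := ENNReal.tsum_mul_left
      _ < ⊤ := ENNReal.mul_lt_top ENNReal.ofReal_lt_top he
  · intro hT
    rw [hsplit] at hT
    have hTsum : (∑' k : ℕ, ENNReal.ofReal D⁻¹ * ENNReal.ofReal (g k)) ≤
        ∑' k : ℕ, ∫⁻ t in Set.Ico ((2:ℝ) ^ k) ((2:ℝ) ^ (k + 1)),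
          ENNReal.ofReal (α t ^ 2 / t ^ r) := ENNReal.tsum_le_tsum hILB
    rw [ENNReal.tsum_mul_left] at hTsum
    have hDinv : ENNReal.ofReal D⁻¹ ≠ 0 := by
      simp [ENNReal.ofReal_eq_zero, not_le, inv_pos, hD0]
    have he : (∑' k : ℕ, ENNReal.ofReal (g k)) ≠ ⊤ := by
      intro htop
      rw [htop, ENNReal.mul_top hDinv] at hTsum
      exact (lt_irrefl ⊤ (lt_of_le_of_lt hTsum hT))
    have hs := ENNReal.summable_toReal he
    have hfun : (fun k : ℕ => (ENNReal.ofReal (g k)).toReal) = g :=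
      funext fun k => ENNReal.toReal_ofReal (hgpos k).le
    rwa [hfun] at hs
end
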